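/- Consider a faithful functor U : K → Set that preserves codirected limits and monomorphisms. If Q is an object of K such that U(Q) is finite, then for every codirected limit cone (π_i : L → D_i)_{i ∈ I} in K and every monomorphism m : Q → L, there exists i ∈ I such that π_i ∘ m is a monomorphism. -/

import Mathlib

open CategoryTheory Limits

theorem stmt3 {K : Type u} [Category.{v} K] (U : K ⥤ Type v) [U.Faithful]
    (hmono : ∀ {X Y : K} (f : X ⟶ Y), Mono f → Mono (U.map f))
    {I : Type v} [PartialOrder I]
    (hcod : ∀ s : Finset I, ∃ j : I, ∀ i ∈ s, j ≤ i)
    (D : I ⥤ K) [PreservesLimit D U]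
    (c : Cone D) (hc : IsLimit c)
    (Q : K) [Finite (U.obj Q)] (m : Q ⟶ c.pt) [Mono m] :
    ∃ i : I, Mono (m ≫ c.π.app i) := by
  classical
  have hUm : Function.Injective (U.map m) :=
    (mono_iff_injective _).mp (hmono m inferInstance)
  have hlim : IsLimit (U.mapCone c) := isLimitOfPreserves U hc
  have hsep : ∀ a b : U.obj c.pt,
      (∀ i, U.map (c.π.app i) a = U.map (c.π.app i) b) → a = b := by
    intro a b h
    apply (Types.isLimitEquivSections hlim).injective
    ext i
    simp only [Types.isLimitEquivSections_apply]
    exact h i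
  have hpair : ∀ x y : U.obj Q, x ≠ y →
      ∃ i, U.map (c.π.app i) (U.map m x) ≠ U.map (c.π.app i) (U.map m y) := by
    intro x y hxy
    by_contra h
    push_neg at h
    exact hxy (hUm (hsep _ _ h))
  haveI : Fintype (U.obj Q) := Fintype.ofFinite _
  choose f hf using hpair
  let s : Finset I := Finset.univ.image
    (fun p : {p : U.obj Q × U.obj Q // p.1 ≠ p.2} => f p.1.1 p.1.2 p.2)
  obtain ⟨j, hj⟩ := hcod s
  refine ⟨j, ?_⟩
  have hinj : Function.Injective (U.map (m ≫ c.π.app j)) := by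
    intro x y hxy
    by_contra hne
    have hij : j ≤ f x y hne :=
      hj _ (Finset.mem_image.mpr ⟨⟨(x, y), hne⟩, Finset.mem_univ _, rfl⟩)
    apply hf x y hne
    have hcomp : c.π.app (f x y hne) = c.π.app j ≫ D.map (homOfLE hij) := (c.w (homOfLE hij)).symm
    have hxy' : U.map (c.π.app j) (U.map m x) = U.map (c.π.app j) (U.map m y) := by
      simpa [U.map_comp] using hxy
    rw [hcomp, U.map_comp]
    simp [types_comp_apply, hxy']
  exact U.mono_of_mono_map ((mono_iff_injective _).mpr hinj)
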